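/- Let E be a row-finite directed graph. Then the graph monoid M_E is a refinement monoid, and M_E is separative. That is: (refinement) whenever a_1 + a_2 = b_1 + b_2 in M_E, there exist elements m_{11}, m_{12}, m_{21}, m_{22} ∈ M_E with a_1 = m_{11} + m_{12}, a_2 = m_{21} + m_{22}, b_1 = m_{11} + m_{21}, and b_2 = m_{12} + m_{22}; and (separativity) whenever a, b, c ∈ M_E satisfy a + c = b + c and there exist n ∈ ℕ and elements u, w ∈ M_E with c + u = n·a and c + w = n·b, then a = b. -/

import Mathlib

/-- The defining relations of the graph monoid `M_E` of a graph with vertices `V`, edges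
`E` and source and range maps `s, r`: for each non-sink `v` emitting finitely many edges,
`a_v = ∑_{s(e) = v} a_{r(e)}`, as a relation on the free commutative monoid `V →₀ ℕ`. -/
inductive GMRel {V E : Type} (s r : E → V) : (V →₀ ℕ) → (V →₀ ℕ) → Prop
  | ck (v : V) (h : {e : E | s e = v}.Finite) (hne : {e : E | s e = v}.Nonempty) :
      GMRel s r (Finsupp.single v 1) (h.toFinset.sum fun e => Finsupp.single (r e) 1)

/-- The graph monoid `M_E`: the free commutative monoid on the vertices of `E`, modulo
the relations `a_v = ∑_{s(e) = v} a_{r(e)}` for each non-sink `v`. -/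
abbrev GraphMonoid {V E : Type} (s r : E → V) : Type :=
  (addConGen (GMRel s r)).Quotient

namespace GMAux

variable {V E : Type} (s r : E → V)

/-- non-sink -/
def NS (v : V) : Prop := {e : E | s e = v}.Nonempty

variable (hrow : ∀ v : V, {e : E | s e = v}.Finite)

noncomputable def exp (v : V) : V →₀ ℕ := (hrow v).toFinset.sum fun e => Finsupp.single (r e) 1

def Step (x y : V →₀ ℕ) : Prop :=
  ∃ v z, NS s v ∧ x = Finsupp.single v 1 + z ∧ y = exp s r hrow v + z

inductive Steps : ℕ → (V →₀ ℕ) → (V →₀ ℕ) → Prop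
  | refl (x) : Steps 0 x x
  | head {x y z n} : Step s r hrow x y → Steps n y z → Steps (n + 1) x z

abbrev CC (x y : V →₀ ℕ) : Prop := addConGen (GMRel s r) x y

section basic
variable {s r hrow}

lemma canc {a b c : V →₀ ℕ} (h : a + b = a + c) : b = c := by
  ext x
  have := DFunLike.congr_fun h x
  simp only [Finsupp.add_apply] at this
  omega

lemma split_single {x : V →₀ ℕ} {w : V} (h : 1 ≤ x w) :
    ∃ y, x = Finsupp.single w 1 + y := by
  refine ⟨x - Finsupp.single w 1, ?_⟩
  ext a
  by_cases hwa : w = a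
  · subst hwa
    simp only [Finsupp.add_apply, Finsupp.tsub_apply, Finsupp.single_eq_same]
    omega
  · simp only [Finsupp.add_apply, Finsupp.tsub_apply, Finsupp.single_eq_of_ne' hwa]
    omega

lemma sing_eq_sing_add {v u : V} {z : V →₀ ℕ}
    (h : Finsupp.single v 1 = Finsupp.single u 1 + z) : u = v ∧ z = 0 := by
  have hu := DFunLike.congr_fun h u
  simp only [Finsupp.add_apply, Finsupp.single_eq_same] at hu
  have huv : u = v := by
    by_contra hne
    rw [Finsupp.single_eq_of_ne' (Ne.symm hne)] at hu
    omega
  subst huv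
  refine ⟨rfl, ?_⟩
  have : Finsupp.single u 1 + (0 : V →₀ ℕ) = Finsupp.single u 1 + z := by
    rw [add_zero]; exact h
  exact (canc this).symm

lemma exp_apply_pos {v : V} (hv : NS s v) : ∃ w, 1 ≤ exp s r hrow v w := by
  obtain ⟨e, he⟩ := hv
  refine ⟨r e, ?_⟩
  have hmem : e ∈ (hrow v).toFinset := (hrow v).mem_toFinset.2 he
  have : Finsupp.single (r e) 1 ≤ (hrow v).toFinset.sum fun e => Finsupp.single (r e) 1 :=
    Finset.single_le_sum (f := fun e => Finsupp.single (r e) (1:ℕ)) (fun _ _ => by positivity) hmem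
  have := this (r e)
  simpa [exp, Finsupp.single_eq_same] using this

lemma step_zero_src {y : V →₀ ℕ} (h : Step s r hrow 0 y) : False := by
  obtain ⟨v, z, hv, hx, -⟩ := h
  have := DFunLike.congr_fun hx v
  simp only [Finsupp.coe_zero, Pi.zero_apply, Finsupp.add_apply, Finsupp.single_eq_same] at this
  omega

lemma step_nonzero_tgt {x y : V →₀ ℕ} (h : Step s r hrow x y) : y ≠ 0 := by
  obtain ⟨v, z, hv, -, hy⟩ := h
  obtain ⟨w, hw⟩ := exp_apply_pos (r := r) (hrow := hrow) hv
  intro h0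
  rw [h0] at hy
  have := DFunLike.congr_fun hy w
  simp only [Finsupp.coe_zero, Pi.zero_apply, Finsupp.add_apply] at this
  omega

lemma steps_zero_src {n : ℕ} {c : V →₀ ℕ} (h : Steps s r hrow n 0 c) : n = 0 ∧ c = 0 := by
  cases h with
  | refl => exact ⟨rfl, rfl⟩
  | head hs _ => exact absurd hs step_zero_src

lemma steps_to_zero' : ∀ {n : ℕ} {x c : V →₀ ℕ}, Steps s r hrow n x c → c = 0 → x = 0 := by
  intro n x c h
  induction h with
  | refl => exact fun h => h
  | head hs rest ih => exact fun h0 => absurd (ih h0) (step_nonzero_tgt hs)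

lemma steps_to_zero {n : ℕ} {x : V →₀ ℕ} (h : Steps s r hrow n x 0) : x = 0 :=
  steps_to_zero' h rfl

end basic
end GMAux
section chunk2
namespace GMAux
variable {V E : Type} {s r : E → V} {hrow : ∀ v : V, {e : E | s e = v}.Finite}

lemma Step.add_right {x y : V →₀ ℕ} (h : Step s r hrow x y) (d : V →₀ ℕ) :
    Step s r hrow (x + d) (y + d) := by
  obtain ⟨v, z, hv, hx, hy⟩ := h
  exact ⟨v, z + d, hv, by rw [hx, add_assoc], by rw [hy, add_assoc]⟩

lemma Steps.add_right' {n : ℕ} {x y : V →₀ ℕ} (h : Steps s r hrow n x y) (d : V →₀ ℕ) :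
    Steps s r hrow n (x + d) (y + d) := by
  induction h with
  | refl => exact Steps.refl _
  | head hs _ ih => exact Steps.head (hs.add_right d) ih

lemma Steps.trans' : ∀ {n m : ℕ} {x y z : V →₀ ℕ}, Steps s r hrow n x y →
    Steps s r hrow m y z → Steps s r hrow (n + m) x z := by
  intro n m x y z h1
  induction h1 with
  | refl => intro h2; simpa using h2
  | head hs _ ih => intro h2; exact Nat.succ_add _ _ ▸ Steps.head hs (ih h2)

lemma Steps.combine {n m : ℕ} {x y x' y' : V →₀ ℕ} (h1 : Steps s r hrow n x y)
    (h2 : Steps s r hrow m x' y') : Steps s r hrow (n + m) (x + x') (y + y') := by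
  have a1 := h1.add_right' x'
  have a2 := h2.add_right' y
  rw [add_comm x' y, add_comm y' y] at a2
  exact a1.trans' a2

def RT (s r : E → V) (hrow : ∀ v : V, {e : E | s e = v}.Finite) (x y : V →₀ ℕ) : Prop :=
  ∃ n, Steps s r hrow n x y

lemma RT.refl (x : V →₀ ℕ) : RT s r hrow x x := ⟨0, Steps.refl x⟩

lemma RT.trans {x y z : V →₀ ℕ} (h1 : RT s r hrow x y) (h2 : RT s r hrow y z) :
    RT s r hrow x z := by
  obtain ⟨n, h1⟩ := h1; obtain ⟨m, h2⟩ := h2; exact ⟨n + m, h1.trans' h2⟩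

lemma RT.combine {x y x' y' : V →₀ ℕ} (h1 : RT s r hrow x y) (h2 : RT s r hrow x' y') :
    RT s r hrow (x + x') (y + y') := by
  obtain ⟨n, h1⟩ := h1; obtain ⟨m, h2⟩ := h2; exact ⟨n + m, h1.combine h2⟩

lemma RT.of_step {x y : V →₀ ℕ} (h : Step s r hrow x y) : RT s r hrow x y :=
  ⟨1, Steps.head h (Steps.refl y)⟩

lemma diamond {x y₁ y₂ : V →₀ ℕ} (h1 : Step s r hrow x y₁) (h2 : Step s r hrow x y₂) :
    y₁ = y₂ ∨ ∃ z, Step s r hrow y₁ z ∧ Step s r hrow y₂ z := by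
  obtain ⟨v, z₁, hv, hx1, hy1⟩ := h1
  obtain ⟨u, z₂, hu, hx2, hy2⟩ := h2
  by_cases hvu : v = u
  · subst hvu
    left
    have : z₁ = z₂ := canc (hx1 ▸ hx2)
    rw [hy1, hy2, this]
  · right
    have hx12 : Finsupp.single v 1 + z₁ = Finsupp.single u 1 + z₂ := hx1 ▸ hx2
    have hxv := DFunLike.congr_fun hx12 v
    simp only [Finsupp.add_apply, Finsupp.single_eq_same,
      Finsupp.single_eq_of_ne' (Ne.symm hvu)] at hxv
    have hz2v : 1 ≤ z₂ v := by omega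
    obtain ⟨t, ht⟩ := split_single hz2v
    have hz1 : z₁ = Finsupp.single u 1 + t := by
      apply canc (a := Finsupp.single v 1)
      rw [hx12, ht]
      abel
    refine ⟨exp s r hrow v + exp s r hrow u + t, ?_, ?_⟩
    · exact ⟨u, exp s r hrow v + t, hu, by rw [hy1, hz1]; abel, by abel⟩
    · exact ⟨v, exp s r hrow u + t, hv, by rw [hy2, ht]; abel, by abel⟩

lemma strip : ∀ {n : ℕ} {x z : V →₀ ℕ}, Steps s r hrow n x z →
    ∀ {y}, Step s r hrow x y → ∃ w, RT s r hrow y w ∧ RT s r hrow z w := by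
  intro n x z h
  induction h with
  | refl => exact fun {y} hs => ⟨y, RT.refl y, RT.of_step hs⟩
  | head hs' rest ih =>
    intro y hs
    rcases diamond hs hs' with heq | ⟨d, hd1, hd2⟩
    · subst heq
      exact ⟨_, ⟨_, rest⟩, RT.refl _⟩
    · obtain ⟨w, hw1, hw2⟩ := ih hd2
      exact ⟨w, (RT.of_step hd1).trans hw1, hw2⟩

lemma confluence' : ∀ {n : ℕ} {x y : V →₀ ℕ}, Steps s r hrow n x y →
    ∀ {z}, RT s r hrow x z → ∃ w, RT s r hrow y w ∧ RT s r hrow z w := by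
  intro n x y h1
  induction h1 with
  | refl => exact fun hz => ⟨_, hz, RT.refl _⟩
  | head hs rest ih =>
    intro z hz
    obtain ⟨m, h2⟩ := hz
    obtain ⟨u, hu1, hu2⟩ := strip h2 hs
    obtain ⟨w, hw1, hw2⟩ := ih hu1
    exact ⟨w, hw1, hu2.trans hw2⟩

lemma confluence {x y z : V →₀ ℕ} (h1 : RT s r hrow x y) (h2 : RT s r hrow x z) :
    ∃ w, RT s r hrow y w ∧ RT s r hrow z w := by
  obtain ⟨n, h1⟩ := h1
  exact confluence' h1 h2

end GMAux
end chunk2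
section chunk3
namespace GMAux
variable {V E : Type} {s r : E → V} {hrow : ∀ v : V, {e : E | s e = v}.Finite}

lemma cc_refl (x : V →₀ ℕ) : CC s r x x := (addConGen (GMRel s r)).refl x

lemma CC.symm' {x y : V →₀ ℕ} (h : CC s r x y) : CC s r y x :=
  (addConGen (GMRel s r)).symm h

lemma CC.trans'' {x y z : V →₀ ℕ} (h1 : CC s r x y) (h2 : CC s r y z) : CC s r x z :=
  (addConGen (GMRel s r)).trans h1 h2

lemma CC.add' {x y x' y' : V →₀ ℕ} (h1 : CC s r x y) (h2 : CC s r x' y') :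
    CC s r (x + x') (y + y') :=
  (addConGen (GMRel s r)).add h1 h2

lemma cc_add_left {x y : V →₀ ℕ} (z : V →₀ ℕ) (h : CC s r x y) : CC s r (z + x) (z + y) :=
  (cc_refl z).add' h

lemma cc_add_right {x y : V →₀ ℕ} (z : V →₀ ℕ) (h : CC s r x y) : CC s r (x + z) (y + z) :=
  h.add' (cc_refl z)

lemma cc_base {v : V} (hv : NS s v) :
    CC s r (Finsupp.single v 1) (exp s r hrow v) := by
  have : GMRel s r (Finsupp.single v 1) (exp s r hrow v) := GMRel.ck v (hrow v) hv
  exact AddConGen.Rel.of _ _ this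

lemma cc_of_step {x y : V →₀ ℕ} (h : Step s r hrow x y) : CC s r x y := by
  obtain ⟨v, z, hv, hx, hy⟩ := h
  rw [hx, hy]
  exact (cc_base (hrow := hrow) hv).add' (cc_refl z)

lemma cc_of_rt {x y : V →₀ ℕ} (h : RT s r hrow x y) : CC s r x y := by
  obtain ⟨n, h⟩ := h
  induction h with
  | refl => exact cc_refl _
  | head hs _ ih => exact (cc_of_step hs).trans'' ih

/-- The joinability congruence. -/
noncomputable def Jcon (s r : E → V) (hrow : ∀ v : V, {e : E | s e = v}.Finite) :
    AddCon (V →₀ ℕ) where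
  r := fun x y => ∃ γ, RT s r hrow x γ ∧ RT s r hrow y γ
  iseqv := by
    refine ⟨fun x => ⟨x, RT.refl x, RT.refl x⟩, ?_, ?_⟩
    · rintro x y ⟨γ, h1, h2⟩; exact ⟨γ, h2, h1⟩
    · rintro x y z ⟨γ, h1, h2⟩ ⟨δ, h3, h4⟩
      obtain ⟨w, hw1, hw2⟩ := confluence h2 h3
      exact ⟨w, h1.trans hw1, h4.trans hw2⟩
  add' := by
    rintro a b c d ⟨γ, h1, h2⟩ ⟨δ, h3, h4⟩
    exact ⟨γ + δ, h1.combine h3, h2.combine h4⟩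

lemma cc_iff_joined {x y : V →₀ ℕ} :
    CC s r x y ↔ ∃ γ, RT s r hrow x γ ∧ RT s r hrow y γ := by
  constructor
  · intro h
    refine (AddCon.addConGen_le (c := Jcon s r hrow)).2 ?_ h
    rintro a b ⟨v, hfin, hne⟩
    refine ⟨exp s r hrow v, RT.of_step ⟨v, 0, hne, (add_zero _).symm, (add_zero _).symm⟩, ?_⟩
    have : (Set.Finite.toFinset hfin).sum (fun e => Finsupp.single (r e) (1:ℕ)) =
        exp s r hrow v := rfl
    rw [this]
    exact RT.refl _
  · rintro ⟨γ, h1, h2⟩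
    exact (cc_of_rt h1).trans'' (cc_of_rt h2).symm'

lemma step_split {a b y : V →₀ ℕ} (h : Step s r hrow (a + b) y) :
    (∃ a', Step s r hrow a a' ∧ y = a' + b) ∨ (∃ b', Step s r hrow b b' ∧ y = a + b') := by
  obtain ⟨v, z, hv, hx, hy⟩ := h
  have hxv := DFunLike.congr_fun hx v
  simp only [Finsupp.add_apply, Finsupp.single_eq_same] at hxv
  have : 1 ≤ a v ∨ 1 ≤ b v := by omega
  rcases this with hav | hbv
  · obtain ⟨a₀, ha₀⟩ := split_single hav
    left
    have hz : z = a₀ + b := by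
      apply canc (a := Finsupp.single v 1)
      rw [← hx, ha₀, add_assoc]
    exact ⟨exp s r hrow v + a₀, ⟨v, a₀, hv, ha₀, rfl⟩, by rw [hy, hz]; abel⟩
  · obtain ⟨b₀, hb₀⟩ := split_single hbv
    right
    have hz : z = a + b₀ := by
      apply canc (a := Finsupp.single v 1)
      rw [← hx, hb₀]
      abel
    exact ⟨exp s r hrow v + b₀, ⟨v, b₀, hv, hb₀, rfl⟩, by rw [hy, hz]; abel⟩

lemma steps_split : ∀ {n : ℕ} {x c : V →₀ ℕ}, Steps s r hrow n x c →
    ∀ {a b}, x = a + b →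
    ∃ n₁ n₂ c₁ c₂, n₁ + n₂ = n ∧ c = c₁ + c₂ ∧
      Steps s r hrow n₁ a c₁ ∧ Steps s r hrow n₂ b c₂ := by
  intro n x c h
  induction h with
  | refl x => exact fun {a b} hab => ⟨0, 0, a, b, rfl, hab, Steps.refl a, Steps.refl b⟩
  | head hs rest ih =>
    intro a b hab
    subst hab
    rcases step_split hs with ⟨a', ha', hy⟩ | ⟨b', hb', hy⟩
    · obtain ⟨n₁, n₂, c₁, c₂, hn, hc, hs1, hs2⟩ := ih hy
      exact ⟨n₁ + 1, n₂, c₁, c₂, by omega, hc, Steps.head ha' hs1, hs2⟩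
    · obtain ⟨n₁, n₂, c₁, c₂, hn, hc, hs1, hs2⟩ := ih hy
      exact ⟨n₁, n₂ + 1, c₁, c₂, by omega, hc, hs1, Steps.head hb' hs2⟩

lemma steps_split_finset {ι : Type} : ∀ (t : Finset ι) (f : ι → (V →₀ ℕ)) {n : ℕ} {c : V →₀ ℕ},
    Steps s r hrow n (∑ i ∈ t, f i) c →
    ∃ (g : ι → ℕ) (F : ι → (V →₀ ℕ)), (∑ i ∈ t, g i) = n ∧ c = ∑ i ∈ t, F i ∧
      ∀ i ∈ t, Steps s r hrow (g i) (f i) (F i) := by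
  classical
  intro t
  induction t using Finset.cons_induction with
  | empty =>
    intro f n c h
    simp only [Finset.sum_empty] at h
    obtain ⟨hn, hc⟩ := steps_zero_src h
    exact ⟨fun _ => 0, fun _ => 0, by simp [hn], by simp [hc], by simp⟩
  | cons i t' hi ih =>
    intro f n c h
    rw [Finset.sum_cons] at h
    obtain ⟨n₁, n₂, c₁, c₂, hn, hc, hs1, hs2⟩ := steps_split h rfl
    obtain ⟨g', F', hg', hF', hst'⟩ := ih f hs2
    have hupg : ∀ x ∈ t', Function.update g' i n₁ x = g' x :=
      fun x hx => Function.update_of_ne (fun h : x = i => hi (h ▸ hx)) _ _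
    have hupF : ∀ x ∈ t', Function.update F' i c₁ x = F' x :=
      fun x hx => Function.update_of_ne (fun h : x = i => hi (h ▸ hx)) _ _
    refine ⟨Function.update g' i n₁, Function.update F' i c₁, ?_, ?_, ?_⟩
    · have e1 : (∑ x ∈ t', Function.update g' i n₁ x) = ∑ x ∈ t', g' x :=
        Finset.sum_congr rfl hupg
      rw [Finset.sum_cons, Function.update_self, e1]
      have e2 : (∑ x ∈ t', g' x) = n₂ := hg'
      omega
    · have eF : (∑ x ∈ t', Function.update F' i c₁ x) = ∑ x ∈ t', F' x :=
        Finset.sum_congr rfl hupF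
      rw [Finset.sum_cons, Function.update_self, eF, hc]
      exact congrArg (c₁ + ·) hF'
    · intro j hj
      rcases Finset.mem_cons.1 hj with rfl | hj'
      · rw [Function.update_self, Function.update_self]; exact hs1
      · rw [hupg j hj', hupF j hj']
        exact hst' j hj'

lemma steps_single {n : ℕ} {v : V} {X : V →₀ ℕ}
    (h : Steps s r hrow n (Finsupp.single v 1) X) (hn : n ≠ 0) :
    NS s v ∧ Steps s r hrow (n - 1) (exp s r hrow v) X := by
  cases h with
  | refl => exact absurd rfl hn
  | head hs rest =>
    obtain ⟨u, z, hu, hx, hy⟩ := hs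
    obtain ⟨huv, hz⟩ := sing_eq_sing_add hx
    subst huv hz
    rw [add_zero] at hy
    subst hy
    simpa using ⟨hu, rest⟩

lemma fin_refine {a₁ a₂ b₁ b₂ : V →₀ ℕ} (h : a₁ + a₂ = b₁ + b₂) :
    ∃ m₁₁ m₁₂ m₂₁ m₂₂ : V →₀ ℕ, a₁ = m₁₁ + m₁₂ ∧ a₂ = m₂₁ + m₂₂ ∧
      b₁ = m₁₁ + m₂₁ ∧ b₂ = m₁₂ + m₂₂ := by
  classical
  set m₁₁ : V →₀ ℕ := Finsupp.zipWith min (Nat.min_self 0) a₁ b₁ with hm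
  refine ⟨m₁₁, a₁ - m₁₁, b₁ - m₁₁, a₂ - (b₁ - m₁₁), ?_, ?_, ?_, ?_⟩ <;>
  · ext x
    have hx := DFunLike.congr_fun h x
    simp only [Finsupp.add_apply] at hx
    simp only [Finsupp.add_apply, Finsupp.tsub_apply, hm, Finsupp.zipWith_apply]
    omega

end GMAux
end chunk3
section chunk4
namespace GMAux

structure Col (V : Type) where
  w : V
  A : V →₀ ℕ
  nA : ℕ
  B : V →₀ ℕ
  nB : ℕ
  A' : V →₀ ℕ
  nA' : ℕ
  B' : V →₀ ℕ
  nB' : ℕ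

variable {V E : Type} {s r : E → V} {hrow : ∀ v : V, {e : E | s e = v}.Finite}

def ValidC (s : E → V) (r : E → V) (hrow : ∀ v : V, {e : E | s e = v}.Finite)
    (c : Col V) : Prop :=
  Steps s r hrow c.nA (Finsupp.single c.w 1) c.A ∧
  Steps s r hrow c.nB (Finsupp.single c.w 1) c.B ∧
  Steps s r hrow c.nA' (Finsupp.single c.w 1) c.A' ∧
  Steps s r hrow c.nB' (Finsupp.single c.w 1) c.B'

noncomputable def SL (cols : Multiset (Col V)) : V →₀ ℕ := (cols.map fun c => c.A + c.B).sum
noncomputable def SR (cols : Multiset (Col V)) : V →₀ ℕ := (cols.map fun c => c.A' + c.B').sum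
noncomputable def RHO (cols : Multiset (Col V)) : V →₀ ℕ := (cols.map fun c => Finsupp.single c.w 1).sum
def TS (cols : Multiset (Col V)) : ℕ := (cols.map fun c => c.nA + c.nB + c.nA' + c.nB').sum

@[simp] lemma SL_zero : SL (0 : Multiset (Col V)) = 0 := rfl
@[simp] lemma SR_zero : SR (0 : Multiset (Col V)) = 0 := rfl
@[simp] lemma RHO_zero : RHO (0 : Multiset (Col V)) = 0 := rfl
@[simp] lemma SL_cons (c : Col V) (cols : Multiset (Col V)) :
    SL (c ::ₘ cols) = (c.A + c.B) + SL cols := by simp [SL]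
@[simp] lemma SR_cons (c : Col V) (cols : Multiset (Col V)) :
    SR (c ::ₘ cols) = (c.A' + c.B') + SR cols := by simp [SR]
@[simp] lemma RHO_cons (c : Col V) (cols : Multiset (Col V)) :
    RHO (c ::ₘ cols) = Finsupp.single c.w 1 + RHO cols := by simp [RHO]
@[simp] lemma TS_cons (c : Col V) (cols : Multiset (Col V)) :
    TS (c ::ₘ cols) = (c.nA + c.nB + c.nA' + c.nB') + TS cols := by simp [TS]

def swapS (c : Col V) : Col V := ⟨c.w, c.A', c.nA', c.B', c.nB', c.A, c.nA, c.B, c.nB⟩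
def swapL (c : Col V) : Col V := ⟨c.w, c.B, c.nB, c.A, c.nA, c.A', c.nA', c.B', c.nB'⟩
def swapR (c : Col V) : Col V := ⟨c.w, c.A, c.nA, c.B, c.nB, c.B', c.nB', c.A', c.nA'⟩

lemma ValidC_swapS {c : Col V} (h : ValidC s r hrow c) : ValidC s r hrow (swapS c) :=
  ⟨h.2.2.1, h.2.2.2, h.1, h.2.1⟩
lemma ValidC_swapL {c : Col V} (h : ValidC s r hrow c) : ValidC s r hrow (swapL c) :=
  ⟨h.2.1, h.1, h.2.2.1, h.2.2.2⟩
lemma ValidC_swapR {c : Col V} (h : ValidC s r hrow c) : ValidC s r hrow (swapR c) :=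
  ⟨h.1, h.2.1, h.2.2.2, h.2.2.1⟩

lemma SL_map_swapS (cols : Multiset (Col V)) : SL (cols.map swapS) = SR cols := by
  simp [SL, SR, Multiset.map_map]; rfl
lemma SR_map_swapS (cols : Multiset (Col V)) : SR (cols.map swapS) = SL cols := by
  simp [SL, SR, Multiset.map_map]; rfl
lemma RHO_map_swapS (cols : Multiset (Col V)) : RHO (cols.map swapS) = RHO cols := by
  simp [RHO, Multiset.map_map]; rfl
lemma TS_map_swapS (cols : Multiset (Col V)) : TS (cols.map swapS) = TS cols := by
  simp only [TS, Multiset.map_map]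
  congr 1
  exact Multiset.map_congr rfl (fun c _ => by simp [swapS]; omega)

lemma cc_sum {ι : Type} (M : Multiset ι) (f g : ι → (V →₀ ℕ))
    (h : ∀ x ∈ M, CC s r (f x) (g x)) : CC s r ((M.map f).sum) ((M.map g).sum) := by
  induction M using Multiset.induction with
  | empty => simpa using cc_refl 0
  | cons a M ih =>
    simp only [Multiset.map_cons, Multiset.sum_cons]
    exact (h a (Multiset.mem_cons_self a M)).add'
      (ih fun x hx => h x (Multiset.mem_cons_of_mem hx))

lemma percol {c : Col V} (hv : ValidC s r hrow c) (h1 : c.nA ≠ 0) (h2 : c.nB ≠ 0)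
    (h3 : c.nA' ≠ 0) (h4 : c.nB' ≠ 0) :
    ∃ cc : Multiset (Col V), (∀ d ∈ cc, ValidC s r hrow d) ∧
      SL cc = c.A + c.B ∧ SR cc = c.A' + c.B' ∧
      TS cc + 4 = c.nA + c.nB + c.nA' + c.nB' ∧
      CC s r (RHO cc) (Finsupp.single c.w 1) := by
  obtain ⟨hA, hB, hA', hB'⟩ := hv
  obtain ⟨hns, hA⟩ := steps_single hA h1
  obtain ⟨-, hB⟩ := steps_single hB h2
  obtain ⟨-, hA'⟩ := steps_single hA' h3
  obtain ⟨-, hB'⟩ := steps_single hB' h4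
  rw [exp] at hA hB hA' hB'
  obtain ⟨gA, FA, hgA, hFA, hstA⟩ := steps_split_finset _ _ hA
  obtain ⟨gB, FB, hgB, hFB, hstB⟩ := steps_split_finset _ _ hB
  obtain ⟨gA', FA', hgA', hFA', hstA'⟩ := steps_split_finset _ _ hA'
  obtain ⟨gB', FB', hgB', hFB', hstB'⟩ := steps_split_finset _ _ hB'
  refine ⟨(hrow c.w).toFinset.val.map
    (fun e => ⟨r e, FA e, gA e, FB e, gB e, FA' e, gA' e, FB' e, gB' e⟩), ?_, ?_, ?_, ?_, ?_⟩
  · intro d hd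
    obtain ⟨e, he, rfl⟩ := Multiset.mem_map.1 hd
    have he' : e ∈ (hrow c.w).toFinset := he
    exact ⟨hstA e he', hstB e he', hstA' e he', hstB' e he'⟩
  · rw [SL, Multiset.map_map]
    have : ((hrow c.w).toFinset.val.map fun e => FA e + FB e).sum =
        ∑ e ∈ (hrow c.w).toFinset, (FA e + FB e) := rfl
    rw [Function.comp_def]
    rw [this]  -- may fail; handled below
    rw [Finset.sum_add_distrib, ← hFA, ← hFB]
  · rw [SR, Multiset.map_map]
    have : ((hrow c.w).toFinset.val.map fun e => FA' e + FB' e).sum =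
        ∑ e ∈ (hrow c.w).toFinset, (FA' e + FB' e) := rfl
    rw [Function.comp_def, this, Finset.sum_add_distrib, ← hFA', ← hFB']
  · rw [TS, Multiset.map_map]
    have : ((hrow c.w).toFinset.val.map fun e => gA e + gB e + gA' e + gB' e).sum =
        ∑ e ∈ (hrow c.w).toFinset, (gA e + gB e + gA' e + gB' e) := rfl
    rw [Function.comp_def, this]
    rw [Finset.sum_add_distrib, Finset.sum_add_distrib, Finset.sum_add_distrib]
    rw [hgA, hgB, hgA', hgB']
    omega
  · rw [RHO, Multiset.map_map]
    have : ((hrow c.w).toFinset.val.map fun e => Finsupp.single (r e) (1:ℕ)).sum =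
        exp s r hrow c.w := rfl
    rw [Function.comp_def, this]
    exact (cc_base (hrow := hrow) hns).symm'

end GMAux
end chunk4
section chunk5
namespace GMAux
variable {V E : Type} {s r : E → V} {hrow : ∀ v : V, {e : E | s e = v}.Finite}

lemma sum_pos_mem {ι : Type} {M : Multiset ι} {f : ι → (V →₀ ℕ)} {w : V}
    (h : 1 ≤ ((M.map f).sum) w) : ∃ x ∈ M, 1 ≤ (f x) w := by
  induction M using Multiset.induction with
  | empty => simp at h
  | cons a M ih =>
    simp only [Multiset.map_cons, Multiset.sum_cons, Finsupp.add_apply] at h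
    by_cases ha : 1 ≤ (f a) w
    · exact ⟨a, Multiset.mem_cons_self a M, ha⟩
    · obtain ⟨x, hx, hx1⟩ := ih (by omega)
      exact ⟨x, Multiset.mem_cons_of_mem hx, hx1⟩

lemma steps_zero_eq {x y : V →₀ ℕ} (h : Steps s r hrow 0 x y) : x = y := by
  cases h; rfl

lemma core (N : ℕ) (p : Col V) (rest : Multiset (Col V))
    (ih : ∀ (cols' : Multiset (Col V)) (σ' τ' : V →₀ ℕ),
      (∀ c ∈ cols', ValidC s r hrow c) → TS cols' ≤ N →
      Multiset.card cols' ≤ Multiset.card rest →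
      SL cols' + σ' = SR cols' + τ' → CC s r (RHO cols' + σ') (RHO cols' + τ'))
    (hval : ∀ c ∈ p ::ₘ rest, ValidC s r hrow c)
    (hTS : TS (p ::ₘ rest) ≤ N)
    (hA'0 : p.nA' = 0)
    {σ τ : V →₀ ℕ}
    (heq : SL (p ::ₘ rest) + σ = SR (p ::ₘ rest) + τ) :
    CC s r (RHO (p ::ₘ rest) + σ) (RHO (p ::ₘ rest) + τ) := by
  have hpv := hval p (Multiset.mem_cons_self p rest)
  have hA'leaf : p.A' = Finsupp.single p.w 1 := by
    have h := hpv.2.2.1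
    rw [hA'0] at h
    exact (steps_zero_eq h).symm
  have hvrest : ∀ c ∈ rest, ValidC s r hrow c :=
    fun c hc => hval c (Multiset.mem_cons_of_mem hc)
  have hTSrest : TS rest ≤ N := by
    rw [TS_cons] at hTS; omega
  have ccA : CC s r (Finsupp.single p.w 1) p.A := cc_of_rt ⟨_, hpv.1⟩
  have ccB : CC s r (Finsupp.single p.w 1) p.B := cc_of_rt ⟨_, hpv.2.1⟩
  have ccB' : CC s r (Finsupp.single p.w 1) p.B' := cc_of_rt ⟨_, hpv.2.2.2⟩
  have hocc : 1 ≤ σ p.w ∨ 1 ≤ p.A p.w ∨ 1 ≤ p.B p.w ∨ 1 ≤ (SL rest) p.w := by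
    have h := DFunLike.congr_fun heq p.w
    rw [SL_cons, SR_cons, hA'leaf] at h
    simp only [Finsupp.add_apply, Finsupp.single_eq_same] at h
    omega
  -- common tail: from the reduced instance conclusion to the goal
  have tail : ∀ τ₀ : V →₀ ℕ, CC s r (RHO rest + (p.B' + τ₀)) (RHO (p ::ₘ rest) + τ₀) := by
    intro τ₀
    have e1 : RHO rest + (p.B' + τ₀) = p.B' + (RHO rest + τ₀) := by abel
    have e2 : RHO (p ::ₘ rest) + τ₀ = Finsupp.single p.w 1 + (RHO rest + τ₀) := by
      rw [RHO_cons]; abel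
    rw [e1, e2]
    exact cc_add_right _ ccB'.symm'
  rcases hocc with hw | hw | hw | hw
  · -- 1a : the matched vertex lies in σ
    obtain ⟨σ₀, hσ⟩ := split_single hw
    have heq' : SL rest + (p.A + p.B + σ₀) = SR rest + (p.B' + τ) := by
      apply canc (a := Finsupp.single p.w 1)
      calc Finsupp.single p.w 1 + (SL rest + (p.A + p.B + σ₀))
          = SL (p ::ₘ rest) + σ := by rw [SL_cons, hσ]; abel
        _ = SR (p ::ₘ rest) + τ := heq
        _ = Finsupp.single p.w 1 + (SR rest + (p.B' + τ)) := by
            rw [SR_cons, hA'leaf]; abel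
    have hcc := ih rest _ _ hvrest hTSrest (le_refl _) heq'
    have step1 : CC s r (RHO (p ::ₘ rest) + σ) (RHO rest + (p.A + p.B + σ₀)) := by
      have e1 : RHO (p ::ₘ rest) + σ =
          (Finsupp.single p.w 1 + Finsupp.single p.w 1) + (RHO rest + σ₀) := by
        rw [RHO_cons, hσ]; abel
      have e2 : RHO rest + (p.A + p.B + σ₀) = (p.A + p.B) + (RHO rest + σ₀) := by abel
      rw [e1, e2]
      exact cc_add_right _ (ccA.add' ccB)
    exact (step1.trans'' hcc).trans'' (tail τ)
  · -- 1b : matched vertex inside p.A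
    obtain ⟨A₀, hA⟩ := split_single hw
    have heq' : SL rest + (A₀ + p.B + σ) = SR rest + (p.B' + τ) := by
      apply canc (a := Finsupp.single p.w 1)
      calc Finsupp.single p.w 1 + (SL rest + (A₀ + p.B + σ))
          = SL (p ::ₘ rest) + σ := by rw [SL_cons, hA]; abel
        _ = SR (p ::ₘ rest) + τ := heq
        _ = Finsupp.single p.w 1 + (SR rest + (p.B' + τ)) := by
            rw [SR_cons, hA'leaf]; abel
    have hcc := ih rest _ _ hvrest hTSrest (le_refl _) heq'
    have step1 : CC s r (RHO (p ::ₘ rest) + σ) (RHO rest + (A₀ + p.B + σ)) := by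
      have e1 : RHO (p ::ₘ rest) + σ = Finsupp.single p.w 1 + (RHO rest + σ) := by
        rw [RHO_cons]; abel
      rw [e1]
      have hop1 : CC s r (Finsupp.single p.w 1 + (RHO rest + σ))
          (p.A + (RHO rest + σ)) := cc_add_right _ ccA
      have e3 : p.A + (RHO rest + σ) =
          Finsupp.single p.w 1 + (A₀ + RHO rest + σ) := by rw [hA]; abel
      have hop2 : CC s r (Finsupp.single p.w 1 + (A₀ + RHO rest + σ))
          (p.B + (A₀ + RHO rest + σ)) := cc_add_right _ ccB
      have e4 : p.B + (A₀ + RHO rest + σ) = RHO rest + (A₀ + p.B + σ) := by abel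
      exact (hop1.trans'' (e3 ▸ hop2)).trans'' (e4 ▸ cc_refl _)
    exact (step1.trans'' hcc).trans'' (tail τ)
  · -- 1b' : matched vertex inside p.B
    obtain ⟨B₀, hB⟩ := split_single hw
    have heq' : SL rest + (p.A + B₀ + σ) = SR rest + (p.B' + τ) := by
      apply canc (a := Finsupp.single p.w 1)
      calc Finsupp.single p.w 1 + (SL rest + (p.A + B₀ + σ))
          = SL (p ::ₘ rest) + σ := by rw [SL_cons, hB]; abel
        _ = SR (p ::ₘ rest) + τ := heq
        _ = Finsupp.single p.w 1 + (SR rest + (p.B' + τ)) := by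
            rw [SR_cons, hA'leaf]; abel
    have hcc := ih rest _ _ hvrest hTSrest (le_refl _) heq'
    have step1 : CC s r (RHO (p ::ₘ rest) + σ) (RHO rest + (p.A + B₀ + σ)) := by
      have e1 : RHO (p ::ₘ rest) + σ = Finsupp.single p.w 1 + (RHO rest + σ) := by
        rw [RHO_cons]; abel
      rw [e1]
      have hop1 : CC s r (Finsupp.single p.w 1 + (RHO rest + σ))
          (p.B + (RHO rest + σ)) := cc_add_right _ ccB
      have e3 : p.B + (RHO rest + σ) =
          Finsupp.single p.w 1 + (B₀ + RHO rest + σ) := by rw [hB]; abel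
      have hop2 : CC s r (Finsupp.single p.w 1 + (B₀ + RHO rest + σ))
          (p.A + (B₀ + RHO rest + σ)) := cc_add_right _ ccA
      have e4 : p.A + (B₀ + RHO rest + σ) = RHO rest + (p.A + B₀ + σ) := by abel
      exact (hop1.trans'' (e3 ▸ hop2)).trans'' (e4 ▸ cc_refl _)
    exact (step1.trans'' hcc).trans'' (tail τ)
  · -- 1c : matched vertex inside another column
    obtain ⟨q, hq, hqw⟩ := sum_pos_mem (f := fun c : Col V => c.A + c.B) hw
    obtain ⟨rest₂, hrest⟩ := Multiset.exists_cons_of_mem hq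
    have hqv : ValidC s r hrow q := hvrest q hq
    have hq' : ∃ q' : Col V, ValidC s r hrow q' ∧ 1 ≤ q'.A p.w ∧ q'.w = q.w ∧
        q'.A + q'.B = q.A + q.B ∧ q'.A' + q'.B' = q.A' + q.B' ∧
        q'.nA + q'.nB + q'.nA' + q'.nB' = q.nA + q.nB + q.nA' + q.nB' := by
      have : 1 ≤ q.A p.w ∨ 1 ≤ q.B p.w := by
        have := DFunLike.congr_fun (rfl : q.A + q.B = q.A + q.B) p.w
        simp only [Finsupp.add_apply] at hqw
        omega
      rcases this with h | h
      · exact ⟨q, hqv, h, rfl, rfl, rfl, rfl⟩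
      · exact ⟨swapL q, ValidC_swapL hqv, h, rfl, add_comm _ _, rfl, by simp [swapL]; omega⟩
    obtain ⟨q', hq'v, hq'A, hq'w, hq'LB, hq'RB, hq'n⟩ := hq'
    obtain ⟨qA₀, hqA⟩ := split_single hq'A
    -- the grafted column
    set gq : Col V := ⟨q'.w, qA₀ + p.A, q'.nA + p.nA, q'.B, q'.nB, q'.A', q'.nA', q'.B', q'.nB'⟩
      with hgq
    have hgqv : ValidC s r hrow gq := by
      refine ⟨?_, hq'v.2.1, hq'v.2.2.1, hq'v.2.2.2⟩
      have h1 : Steps s r hrow q'.nA (Finsupp.single q'.w 1)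
          (Finsupp.single p.w 1 + qA₀) := hqA ▸ hq'v.1
      have h2 : Steps s r hrow p.nA (Finsupp.single p.w 1 + qA₀) (p.A + qA₀) :=
        (hpv.1).add_right' qA₀
      have := h1.trans' h2
      rwa [show p.A + qA₀ = qA₀ + p.A from add_comm _ _] at this
    set cols' : Multiset (Col V) := gq ::ₘ rest₂ with hcols'
    have hv' : ∀ c ∈ cols', ValidC s r hrow c := by
      intro c hc
      rcases Multiset.mem_cons.1 hc with rfl | hc₂
      · exact hgqv
      · exact hvrest c (hrest ▸ Multiset.mem_cons_of_mem hc₂)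
    have hTS' : TS cols' ≤ N := by
      have h1 : TS (p ::ₘ rest) = (p.nA + p.nB + p.nA' + p.nB') +
          ((q.nA + q.nB + q.nA' + q.nB') + TS rest₂) := by
        rw [TS_cons, hrest, TS_cons]
      rw [hcols', TS_cons]
      simp only [hgq]
      omega
    have hcard' : Multiset.card cols' ≤ Multiset.card rest := by
      rw [hcols', hrest]
      simp
    have heq' : SL cols' + (p.B + σ) = SR cols' + (p.B' + τ) := by
      apply canc (a := Finsupp.single p.w 1)
      calc Finsupp.single p.w 1 + (SL cols' + (p.B + σ))
          = SL (p ::ₘ rest) + σ := by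
            rw [hcols', SL_cons, SL_cons, hrest, SL_cons, ← hq'LB, hqA]
            simp only [hgq]
            abel
        _ = SR (p ::ₘ rest) + τ := heq
        _ = Finsupp.single p.w 1 + (SR cols' + (p.B' + τ)) := by
            rw [hcols', SR_cons, SR_cons, hrest, SR_cons, ← hq'RB, hA'leaf]
            simp only [hgq]
            abel
    have hcc := ih cols' _ _ hv' hTS' hcard' heq'
    have hRHO : RHO cols' = RHO rest := by
      rw [hcols', RHO_cons, hrest, RHO_cons]
      simp only [hgq, hq'w]
    rw [hRHO] at hcc
    have step1 : CC s r (RHO (p ::ₘ rest) + σ) (RHO rest + (p.B + σ)) := by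
      have e1 : RHO (p ::ₘ rest) + σ = Finsupp.single p.w 1 + (RHO rest + σ) := by
        rw [RHO_cons]; abel
      have e2 : RHO rest + (p.B + σ) = p.B + (RHO rest + σ) := by abel
      rw [e1, e2]
      exact cc_add_right _ ccB
    exact (step1.trans'' hcc).trans'' (tail τ)

end GMAux
end chunk5
section chunk6
namespace GMAux
variable {V E : Type} {s r : E → V} {hrow : ∀ v : V, {e : E | s e = v}.Finite}

lemma main_lemma : ∀ (N M : ℕ) (cols : Multiset (Col V)) (σ τ : V →₀ ℕ),
    (∀ c ∈ cols, ValidC s r hrow c) → TS cols ≤ N → Multiset.card cols ≤ M →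
    SL cols + σ = SR cols + τ → CC s r (RHO cols + σ) (RHO cols + τ) := by
  intro N
  induction N using Nat.strong_induction_on with
  | _ N ihN =>
  intro M
  induction M using Nat.strong_induction_on with
  | _ M ihM =>
  intro cols σ τ hval hTS hcard heq
  classical
  by_cases hc0 : cols = 0
  · subst hc0
    simp only [SL_zero, SR_zero, RHO_zero, zero_add] at heq ⊢
    rw [heq]
    exact cc_refl _
  have hcpos : 0 < Multiset.card cols := Multiset.card_pos.2 hc0
  by_cases hleaf : ∃ p ∈ cols, p.nA = 0 ∨ p.nB = 0 ∨ p.nA' = 0 ∨ p.nB' = 0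
  · -- a leaf exists somewhere: dispatch to `core` via swaps
    obtain ⟨p, hp, hpcase⟩ := hleaf
    obtain ⟨rest, hrest⟩ := Multiset.exists_cons_of_mem hp
    subst hrest
    have hcardr : Multiset.card rest + 1 ≤ M := by
      have := hcard
      rw [Multiset.card_cons] at this
      omega
    have apply_core : ∀ (c : Col V) (cs : Multiset (Col V)) (σ' τ' : V →₀ ℕ),
        (∀ d ∈ c ::ₘ cs, ValidC s r hrow d) → TS (c ::ₘ cs) ≤ N →
        Multiset.card cs = Multiset.card rest →
        c.nA' = 0 → SL (c ::ₘ cs) + σ' = SR (c ::ₘ cs) + τ' →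
        CC s r (RHO (c ::ₘ cs) + σ') (RHO (c ::ₘ cs) + τ') := by
      intro c cs σ' τ' h1 h2 h3 h4 h5
      refine core N c cs (fun cols' σ'' τ'' k1 k2 k3 k4 => ?_) h1 h2 h4 h5
      refine ihM (M - 1) (by omega) cols' σ'' τ'' k1 k2 ?_ k4
      omega
    have handleR : ∀ (c : Col V) (cs : Multiset (Col V)) (σ' τ' : V →₀ ℕ),
        (∀ d ∈ c ::ₘ cs, ValidC s r hrow d) → TS (c ::ₘ cs) ≤ N →
        Multiset.card cs = Multiset.card rest →
        (c.nA' = 0 ∨ c.nB' = 0) → SL (c ::ₘ cs) + σ' = SR (c ::ₘ cs) + τ' →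
        CC s r (RHO (c ::ₘ cs) + σ') (RHO (c ::ₘ cs) + τ') := by
      intro c cs σ' τ' h1 h2 h3 h4 h5
      rcases h4 with h4 | h4
      · exact apply_core c cs σ' τ' h1 h2 h3 h4 h5
      · have eSL : SL (swapR c ::ₘ cs) = SL (c ::ₘ cs) := by
          rw [SL_cons, SL_cons]
          simp only [swapR]
        have eSR : SR (swapR c ::ₘ cs) = SR (c ::ₘ cs) := by
          rw [SR_cons, SR_cons]
          simp only [swapR]
          rw [add_comm c.B' c.A']
        have eRHO : RHO (swapR c ::ₘ cs) = RHO (c ::ₘ cs) := by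
          rw [RHO_cons, RHO_cons]
          simp only [swapR]
        have eTS : TS (swapR c ::ₘ cs) = TS (c ::ₘ cs) := by
          rw [TS_cons, TS_cons]
          simp only [swapR]
          omega
        have hv' : ∀ d ∈ swapR c ::ₘ cs, ValidC s r hrow d := by
          intro d hd
          rcases Multiset.mem_cons.1 hd with rfl | hd'
          · exact ValidC_swapR (h1 c (Multiset.mem_cons_self c cs))
          · exact h1 d (Multiset.mem_cons_of_mem hd')
        have := apply_core (swapR c) cs σ' τ' hv' (by rw [eTS]; exact h2) h3 h4
          (by rw [eSL, eSR]; exact h5)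
        rwa [eRHO] at this
    have hLR : (p.nA = 0 ∨ p.nB = 0) ∨ (p.nA' = 0 ∨ p.nB' = 0) := by tauto
    rcases hLR with hL | hR
    · have h0' : (swapS p).nA' = 0 ∨ (swapS p).nB' = 0 := by
        simp only [swapS]
        tauto
      have eSL : SL (swapS p ::ₘ rest.map swapS) = SR (p ::ₘ rest) := by
        rw [show (swapS p ::ₘ rest.map swapS) = (p ::ₘ rest).map swapS from
          (Multiset.map_cons _ _ _).symm, SL_map_swapS]
      have eSR : SR (swapS p ::ₘ rest.map swapS) = SL (p ::ₘ rest) := by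
        rw [show (swapS p ::ₘ rest.map swapS) = (p ::ₘ rest).map swapS from
          (Multiset.map_cons _ _ _).symm, SR_map_swapS]
      have eRHO : RHO (swapS p ::ₘ rest.map swapS) = RHO (p ::ₘ rest) := by
        rw [show (swapS p ::ₘ rest.map swapS) = (p ::ₘ rest).map swapS from
          (Multiset.map_cons _ _ _).symm, RHO_map_swapS]
      have eTS : TS (swapS p ::ₘ rest.map swapS) = TS (p ::ₘ rest) := by
        rw [show (swapS p ::ₘ rest.map swapS) = (p ::ₘ rest).map swapS from
          (Multiset.map_cons _ _ _).symm, TS_map_swapS]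
      have hv' : ∀ d ∈ swapS p ::ₘ rest.map swapS, ValidC s r hrow d := by
        intro d hd
        rcases Multiset.mem_cons.1 hd with rfl | hd'
        · exact ValidC_swapS (hval p (Multiset.mem_cons_self p rest))
        · obtain ⟨e, he, rfl⟩ := Multiset.mem_map.1 hd'
          exact ValidC_swapS (hval e (Multiset.mem_cons_of_mem he))
      have hres := handleR (swapS p) (rest.map swapS) τ σ hv' (by rw [eTS]; exact hTS)
        (by rw [Multiset.card_map]) h0' (by rw [eSL, eSR]; exact heq.symm)
      rw [eRHO] at hres
      exact hres.symm'
    · exact handleR p rest σ τ hval hTS rfl hR heq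
  · -- no leaf: expand every tree at its root
    push_neg at hleaf
    have hφ0 : ∀ c : Col V, ∃ cc : Multiset (Col V), c ∈ cols →
        ((∀ d ∈ cc, ValidC s r hrow d) ∧ SL cc = c.A + c.B ∧ SR cc = c.A' + c.B' ∧
          TS cc + 4 = c.nA + c.nB + c.nA' + c.nB' ∧
          CC s r (RHO cc) (Finsupp.single c.w 1)) := by
      intro c
      by_cases hc : c ∈ cols
      · obtain ⟨h1, h2, h3, h4⟩ := hleaf c hc
        obtain ⟨cc, hcc⟩ := percol (hval c hc) h1 h2 h3 h4
        exact ⟨cc, fun _ => hcc⟩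
      · exact ⟨0, fun hc' => absurd hc' hc⟩
    choose φ hφ using hφ0
    set newcols : Multiset (Col V) := cols.bind φ with hnew
    have bind_sum : ∀ {γ : Type} [AddCommMonoid γ] (g : Col V → γ),
        ((cols.bind φ).map g).sum = (cols.map fun c => ((φ c).map g).sum).sum := by
      intro γ _ g
      rw [Multiset.map_bind, Multiset.sum_bind]
    have eSL : SL newcols = SL cols := by
      rw [hnew, SL, bind_sum]
      exact congrArg Multiset.sum (Multiset.map_congr rfl fun c hc => (hφ c hc).2.1)
    have eSR : SR newcols = SR cols := by
      rw [hnew, SR, bind_sum]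
      exact congrArg Multiset.sum (Multiset.map_congr rfl fun c hc => (hφ c hc).2.2.1)
    have eTS : TS newcols + 4 * Multiset.card cols = TS cols := by
      rw [hnew, TS, bind_sum]
      have e1 : (cols.map fun c => ((φ c).map fun d => d.nA + d.nB + d.nA' + d.nB').sum + 4).sum
          = (cols.map fun c => c.nA + c.nB + c.nA' + c.nB').sum :=
        congrArg Multiset.sum (Multiset.map_congr rfl fun c hc => (hφ c hc).2.2.2.1)
      rw [Multiset.sum_map_add] at e1
      have e2 : (cols.map fun _ : Col V => 4).sum = Multiset.card cols * 4 := by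
        rw [Multiset.map_const', Multiset.sum_replicate, smul_eq_mul]
      rw [e2] at e1
      have e3 : TS cols = (cols.map fun c => c.nA + c.nB + c.nA' + c.nB').sum := rfl
      rw [e3, ← e1]
      ring
    have hvnew : ∀ d ∈ newcols, ValidC s r hrow d := by
      intro d hd
      rw [hnew] at hd
      obtain ⟨c, hc, hdc⟩ := Multiset.mem_bind.1 hd
      exact (hφ c hc).1 d hdc
    have ccρ : CC s r (RHO newcols) (RHO cols) := by
      rw [hnew, RHO, RHO, bind_sum]
      exact cc_sum cols _ _ fun c hc => (hφ c hc).2.2.2.2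
    have hTSlt : TS newcols < N := by omega
    have hcc := ihN (TS newcols) hTSlt (Multiset.card newcols) newcols σ τ hvnew
      (le_refl _) (le_refl _) (by rw [eSL, eSR]; exact heq)
    exact ((cc_add_right σ ccρ).symm'.trans'' hcc).trans'' (cc_add_right τ ccρ)

end GMAux
end chunk6
section chunk7
namespace GMAux
variable {V E : Type} {s r : E → V} {hrow : ∀ v : V, {e : E | s e = v}.Finite}

def wt (γ : V →₀ ℕ) : ℕ := γ.sum fun _ n => n

lemma wt_add (x y : V →₀ ℕ) : wt (x + y) = wt x + wt y :=
  Finsupp.sum_add_index' (fun _ => rfl) (fun _ _ _ => rfl)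

lemma wt_single (v : V) : wt (Finsupp.single v 1) = 1 := by
  simp [wt, Finsupp.sum_single_index]

lemma decompose_nonzero {γ : V →₀ ℕ} (h : γ ≠ 0) :
    ∃ v γ₀, γ = Finsupp.single v 1 + γ₀ ∧ wt γ = wt γ₀ + 1 := by
  obtain ⟨v, hv⟩ := Finsupp.support_nonempty_iff.2 h
  have h1 : 1 ≤ γ v := by
    have := Finsupp.mem_support_iff.1 hv
    omega
  obtain ⟨γ₀, hγ₀⟩ := split_single h1
  exact ⟨v, γ₀, hγ₀, by rw [hγ₀, wt_add, wt_single]; omega⟩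

variable (s r hrow)

/-- shorthand for the quotient map -/
noncomputable def mk (x : V →₀ ℕ) : GraphMonoid s r :=
  (x : (addConGen (GMRel s r)).Quotient)

variable {s r hrow}

lemma mk_add (x y : V →₀ ℕ) : mk s r (x + y) = mk s r x + mk s r y :=
  AddCon.coe_add _ _

lemma mk_zero : mk s r (0 : V →₀ ℕ) = 0 := rfl

lemma mk_eq_iff {x y : V →₀ ℕ} : mk s r x = mk s r y ↔ CC s r x y := AddCon.eq _

lemma mk_surj (a : GraphMonoid s r) : ∃ x : V →₀ ℕ, mk s r x = a :=
  AddCon.induction_on a fun x => ⟨x, rfl⟩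

lemma mk_nsmul (n : ℕ) (x : V →₀ ℕ) : mk s r (n • x) = n • mk s r x := by
  induction n with
  | zero => simp [zero_nsmul, mk_zero]
  | succ k ih => rw [succ_nsmul, succ_nsmul, ← ih, ← mk_add]

lemma mk_rt {x y : V →₀ ℕ} (h : RT s r hrow x y) : mk s r x = mk s r y :=
  mk_eq_iff.2 (cc_of_rt h)

/-- Refinement. -/
lemma refine_q (hrow : ∀ v : V, {e : E | s e = v}.Finite) (a₁ a₂ b₁ b₂ : GraphMonoid s r) (h : a₁ + a₂ = b₁ + b₂) :
    ∃ m₁₁ m₁₂ m₂₁ m₂₂ : GraphMonoid s r,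
      a₁ = m₁₁ + m₁₂ ∧ a₂ = m₂₁ + m₂₂ ∧ b₁ = m₁₁ + m₂₁ ∧ b₂ = m₁₂ + m₂₂ := by
  obtain ⟨α₁, rfl⟩ := mk_surj a₁
  obtain ⟨α₂, rfl⟩ := mk_surj a₂
  obtain ⟨β₁, rfl⟩ := mk_surj b₁
  obtain ⟨β₂, rfl⟩ := mk_surj b₂
  have hcc : CC s r (α₁ + α₂) (β₁ + β₂) := mk_eq_iff.1 (by rw [mk_add, mk_add]; exact h)
  obtain ⟨γ, ⟨n, h1⟩, ⟨m, h2⟩⟩ := (cc_iff_joined (hrow := hrow)).1 hcc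
  obtain ⟨n₁, n₂, c₁, c₂, -, hγ1, hs1, hs2⟩ := steps_split h1 rfl
  obtain ⟨m₁, m₂, d₁, d₂, -, hγ2, ht1, ht2⟩ := steps_split h2 rfl
  obtain ⟨m₁₁, m₁₂, m₂₁, m₂₂, e1, e2, e3, e4⟩ :=
    fin_refine (show c₁ + c₂ = d₁ + d₂ from hγ1 ▸ hγ2)
  refine ⟨mk s r m₁₁, mk s r m₁₂, mk s r m₂₁, mk s r m₂₂, ?_, ?_, ?_, ?_⟩
  · rw [← mk_add, ← e1]; exact mk_rt ⟨n₁, hs1⟩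
  · rw [← mk_add, ← e2]; exact mk_rt ⟨n₂, hs2⟩
  · rw [← mk_add, ← e3]; exact mk_rt ⟨m₁, ht1⟩
  · rw [← mk_add, ← e4]; exact mk_rt ⟨m₂, ht2⟩

/-- Conical. -/
lemma conical_q (hrow : ∀ v : V, {e : E | s e = v}.Finite) (x y : GraphMonoid s r) (h : x + y = 0) : x = 0 := by
  obtain ⟨ξ, rfl⟩ := mk_surj x
  obtain ⟨υ, rfl⟩ := mk_surj y
  have hcc : CC s r (ξ + υ) 0 := mk_eq_iff.1 (by rw [mk_add]; exact h)
  obtain ⟨γ, ⟨n, h1⟩, ⟨m, h2⟩⟩ := (cc_iff_joined (hrow := hrow)).1 hcc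
  have hγ : γ = 0 := (steps_zero_src h2).2
  have hξυ : ξ + υ = 0 := steps_to_zero (hγ ▸ h1)
  have hξ : ξ = 0 := by
    ext a
    have := DFunLike.congr_fun hξυ a
    simp only [Finsupp.add_apply, Finsupp.coe_zero, Pi.zero_apply] at this ⊢
    omega
  rw [hξ, mk_zero]

/-- Cancellation of a doubled vertex generator. -/
lemma cancel_v (hrow : ∀ v : V, {e : E | s e = v}.Finite) (v : V) (x y : GraphMonoid s r)
    (h : mk s r (Finsupp.single v 1) + mk s r (Finsupp.single v 1) + x =
         mk s r (Finsupp.single v 1) + mk s r (Finsupp.single v 1) + y) :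
    mk s r (Finsupp.single v 1) + x = mk s r (Finsupp.single v 1) + y := by
  obtain ⟨ξ, rfl⟩ := mk_surj x
  obtain ⟨η, rfl⟩ := mk_surj y
  have hcc : CC s r (Finsupp.single v 1 + (Finsupp.single v 1 + ξ))
      (Finsupp.single v 1 + (Finsupp.single v 1 + η)) := by
    apply mk_eq_iff.1
    rw [mk_add, mk_add, mk_add, mk_add, ← add_assoc, ← add_assoc]
    exact h
  obtain ⟨γ, ⟨n, h1⟩, ⟨m, h2⟩⟩ := (cc_iff_joined (hrow := hrow)).1 hcc
  obtain ⟨nA, n₂, A, rest₁, -, hγ1, hsA, hs₂⟩ := steps_split h1 rfl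
  obtain ⟨nB, n₃, B, ξ', -, hrest₁, hsB, hsξ⟩ := steps_split hs₂ rfl
  obtain ⟨nA', m₂, A', rest₂, -, hγ2, htA, ht₂⟩ := steps_split h2 rfl
  obtain ⟨nB', m₃, B', η', -, hrest₂, htB, htη⟩ := steps_split ht₂ rfl
  set col : Col V := ⟨v, A, nA, B, nB, A', nA', B', nB'⟩ with hcol
  have hvalid : ∀ c ∈ (col ::ₘ 0 : Multiset (Col V)), ValidC s r hrow c := by
    intro c hc
    rcases Multiset.mem_cons.1 hc with rfl | hc'
    · exact ⟨hsA, hsB, htA, htB⟩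
    · simp at hc'
  have heqq : SL (col ::ₘ 0) + ξ' = SR (col ::ₘ 0) + η' := by
    rw [SL_cons, SR_cons, SL_zero, SR_zero]
    have e1 : A + B + ξ' = γ := by rw [hγ1, hrest₁]; abel
    have e2 : A' + B' + η' = γ := by rw [hγ2, hrest₂]; abel
    simp only [hcol]
    rw [add_zero, add_zero, e1, e2]
  have hmain := main_lemma (TS (col ::ₘ 0)) (Multiset.card (col ::ₘ 0)) (col ::ₘ 0) ξ' η'
    hvalid (le_refl _) (le_refl _) heqq
  have hRHO : RHO (col ::ₘ 0) = Finsupp.single v 1 + 0 := by rw [RHO_cons, RHO_zero]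
  rw [hRHO, add_zero] at hmain
  have hx : mk s r ξ = mk s r ξ' := mk_rt ⟨n₃, hsξ⟩
  have hy : mk s r η = mk s r η' := mk_rt ⟨m₃, htη⟩
  rw [hx, hy, ← mk_add, ← mk_add]
  exact mk_eq_iff.2 hmain

/-- Cancellation of a doubled element. -/
lemma cancel_rep (hrow : ∀ v : V, {e : E | s e = v}.Finite) : ∀ (k : ℕ) (γ : V →₀ ℕ), wt γ ≤ k → ∀ x y : GraphMonoid s r,
    mk s r γ + mk s r γ + x = mk s r γ + mk s r γ + y →
    mk s r γ + x = mk s r γ + y := by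
  intro k
  induction k with
  | zero =>
    intro γ hγ x y h
    have h0 : γ = 0 := by
      by_contra hne
      obtain ⟨v, γ₀, -, hwt⟩ := decompose_nonzero hne
      omega
    subst h0
    simp only [mk_zero, zero_add] at h ⊢
    exact h
  | succ k ih =>
    intro γ hγ x y h
    by_cases hne : γ = 0
    · subst hne
      simp only [mk_zero, zero_add] at h ⊢
      exact h
    · obtain ⟨v, γ₀, hdec, hwt⟩ := decompose_nonzero hne
      have hv := cancel_v hrow v (mk s r γ₀ + mk s r γ₀ + x)
        (mk s r γ₀ + mk s r γ₀ + y) (by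
          have e : ∀ z : GraphMonoid s r, mk s r (Finsupp.single v 1) + mk s r (Finsupp.single v 1) +
              (mk s r γ₀ + mk s r γ₀ + z) = mk s r γ + mk s r γ + z := by
            intro z
            rw [hdec, mk_add]
            abel
          rw [e, e]
          exact h)
      have := ih γ₀ (by omega) (mk s r (Finsupp.single v 1) + x)
        (mk s r (Finsupp.single v 1) + y) (by
          have e : ∀ z : GraphMonoid s r, mk s r γ₀ + mk s r γ₀ +
              (mk s r (Finsupp.single v 1) + z) =
              mk s r (Finsupp.single v 1) + (mk s r γ₀ + mk s r γ₀ + z) := by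
            intro z; abel
          rw [e, e]
          exact hv)
      calc mk s r γ + x = mk s r γ₀ + (mk s r (Finsupp.single v 1) + x) := by
            rw [hdec, mk_add]; abel
        _ = mk s r γ₀ + (mk s r (Finsupp.single v 1) + y) := this
        _ = mk s r γ + y := by rw [hdec, mk_add]; abel

end GMAux
end chunk7
section chunk8
namespace GMAux
variable {V E : Type} {s r : E → V}

/-- Separative cancellation for dominated elements. -/
lemma cancel_le (hrow : ∀ v : V, {e : E | s e = v}.Finite) (x y c : GraphMonoid s r)
    (h : x + c = y + c) (hcx : ∃ u, c + u = x) (hcy : ∃ w, c + w = y) : x = y := by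
  obtain ⟨u, hu⟩ := hcx
  obtain ⟨w, hw⟩ := hcy
  obtain ⟨γ, rfl⟩ := mk_surj c
  have h' : mk s r γ + mk s r γ + u = mk s r γ + mk s r γ + w := by
    have e1 : mk s r γ + mk s r γ + u = x + mk s r γ := by rw [← hu]; abel
    have e2 : mk s r γ + mk s r γ + w = y + mk s r γ := by rw [← hw]; abel
    rw [e1, e2, h]
  have := cancel_rep hrow (wt γ) γ (le_refl _) u w h'
  rw [← hu, ← hw]
  exact this

/-- Riesz decomposition. -/
lemma riesz (hrow : ∀ v : V, {e : E | s e = v}.Finite) (c e x y : GraphMonoid s r)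
    (h : c + e = x + y) :
    ∃ c₁ c₂ e₁ e₂ : GraphMonoid s r, c = c₁ + c₂ ∧ c₁ + e₁ = x ∧ c₂ + e₂ = y := by
  obtain ⟨m₁₁, m₁₂, m₂₁, m₂₂, e1, e2, e3, e4⟩ := refine_q hrow c e x y h
  exact ⟨m₁₁, m₁₂, m₂₁, m₂₂, e1, e3.symm, e4.symm⟩

lemma sep (hrow : ∀ v : V, {e : E | s e = v}.Finite) :
    ∀ (k n m : ℕ) (a b c u w : GraphMonoid s r), n + m ≤ k → a + c = b + c →
      c + u = n • a → c + w = m • b → a = b := by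
  intro k
  induction k using Nat.strong_induction_on with
  | _ k ihk =>
  intro n m a b c u w hnm heq hu hw
  by_cases hn0 : n = 0
  · subst hn0
    rw [zero_nsmul] at hu
    have hc0 : c = 0 := conical_q hrow c u hu
    rw [hc0, add_zero, add_zero] at heq
    exact heq
  by_cases hm0 : m = 0
  · subst hm0
    rw [zero_nsmul] at hw
    have hc0 : c = 0 := conical_q hrow c w hw
    rw [hc0, add_zero, add_zero] at heq
    exact heq
  by_cases hn1 : n = 1
  · by_cases hm1 : m = 1
    · subst hn1; subst hm1
      rw [one_nsmul] at hu hw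
      exact cancel_le hrow a b c heq ⟨u, hu⟩ ⟨w, hw⟩
    · -- n = 1, m ≥ 2 : decompose c along m • b
      subst hn1
      have hm2 : 2 ≤ m := by omega
      have hsm : m • b = b + (m - 1) • b := by
        cases m with
        | zero => omega
        | succ k => rw [succ_nsmul]; simp; abel
      obtain ⟨c₁, c₂, e₁, e₂, hcdec, hc1, hc2⟩ := riesz hrow c w b ((m - 1) • b) (by
        rw [hw, hsm])
      have heq' : (b + c₁) + c₂ = (a + c₁) + c₂ := by
        rw [show (b + c₁) + c₂ = b + (c₁ + c₂) from by abel, ← hcdec,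
            show (a + c₁) + c₂ = a + (c₁ + c₂) from by abel, ← hcdec]
        exact heq.symm
      have hu' : c₂ + (e₂ + (m - 1) • c₁) = (m - 1) • (b + c₁) := by
        rw [nsmul_add]
        rw [show c₂ + (e₂ + (m-1) • c₁) = (c₂ + e₂) + (m-1) • c₁ from by abel, hc2]
      have hw' : c₂ + (c₁ + u + 1 • c₁) = 1 • (a + c₁) := by
        rw [one_nsmul, one_nsmul]
        rw [show c₂ + (c₁ + u + c₁) = (c + u) + c₁ from by rw [hcdec]; abel]
        rw [hu, one_nsmul]
      have hba : b + c₁ = a + c₁ :=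
        ihk (m - 1 + 1) (by omega) (m - 1) 1 (b + c₁) (a + c₁) c₂ _ _ (le_refl _)
          heq' hu' hw'
      -- now cancel c₁, which is dominated by b and by 1 • a
      have heq₁ : a + c₁ = b + c₁ := hba.symm
      have ha : c + u = a := by simpa using hu
      have hu₁ : c₁ + (c₂ + u) = 1 • a := by
        rw [one_nsmul, ← ha, hcdec]; abel
      have hw₁ : c₁ + e₁ = 1 • b := by rw [one_nsmul]; exact hc1
      exact ihk (1 + 1) (by omega) 1 1 a b c₁ _ _ (le_refl _) heq₁ hu₁ hw₁
  · -- n ≥ 2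
    have hn2 : 2 ≤ n := by omega
    have hsn : n • a = a + (n - 1) • a := by
      cases n with
      | zero => omega
      | succ k => rw [succ_nsmul]; simp; abel
    obtain ⟨c₁, c₂, e₁, e₂, hcdec, hc1, hc2⟩ := riesz hrow c u a ((n - 1) • a) (by
      rw [hu, hsn])
    have heq' : (a + c₁) + c₂ = (b + c₁) + c₂ := by
      rw [show (a + c₁) + c₂ = a + (c₁ + c₂) from by abel, ← hcdec,
          show (b + c₁) + c₂ = b + (c₁ + c₂) from by abel, ← hcdec]
      exact heq
    have hu' : c₂ + (e₂ + (n - 1) • c₁) = (n - 1) • (a + c₁) := by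
      rw [nsmul_add]
      rw [show c₂ + (e₂ + (n-1) • c₁) = (c₂ + e₂) + (n-1) • c₁ from by abel, hc2]
    have hw' : c₂ + (c₁ + w + m • c₁) = m • (b + c₁) := by
      rw [nsmul_add]
      rw [show c₂ + (c₁ + w + m • c₁) = (c + w) + m • c₁ from by rw [hcdec]; abel, hw]
    have hab : a + c₁ = b + c₁ :=
      ihk (n - 1 + m) (by omega) (n - 1) m (a + c₁) (b + c₁) c₂ _ _ (le_refl _)
        heq' hu' hw'
    have hu₁ : c₁ + e₁ = 1 • a := by rw [one_nsmul]; exact hc1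
    have hw₁ : c₁ + (c₂ + w) = m • b := by rw [← hw, hcdec]; abel
    exact ihk (1 + m) (by omega) 1 m a b c₁ _ _ (le_refl _) hab hu₁ hw₁

end GMAux
end chunk8


theorem graph_monoid_refinement_and_separative (V E : Type) (s r : E → V)
    (hrow : ∀ v : V, {e : E | s e = v}.Finite) :
    (∀ a₁ a₂ b₁ b₂ : GraphMonoid s r, a₁ + a₂ = b₁ + b₂ →
        ∃ m₁₁ m₁₂ m₂₁ m₂₂ : GraphMonoid s r,
          a₁ = m₁₁ + m₁₂ ∧ a₂ = m₂₁ + m₂₂ ∧ b₁ = m₁₁ + m₂₁ ∧ b₂ = m₁₂ + m₂₂) ∧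
      (∀ a b c : GraphMonoid s r, a + c = b + c →
        (∃ n : ℕ, (∃ u : GraphMonoid s r, c + u = n • a) ∧
          (∃ w : GraphMonoid s r, c + w = n • b)) → a = b) := by
  constructor
  · exact fun a₁ a₂ b₁ b₂ h => GMAux.refine_q hrow a₁ a₂ b₁ b₂ h
  · rintro a b c heq ⟨n, ⟨u, hu⟩, ⟨w, hw⟩⟩
    exact GMAux.sep hrow (n + n) n n a b c u w (le_refl _) heq hu hw
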